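/- Let B = X₁ × ⋯ × Xₙ ⊆ ℝ^n be a product of closed intervals Xᵢ ⊆ ℝ, s ∈ {1,...,n-1}, and x ∈ B with ‖x‖₀ < s. If v ∈ ℝ^n satisfies v_T ∈ N_{B_T}(x_T) for every index set T ⊇ supp(x) with |T| = s, then v ∈ N_B(x), where N denotes the normal cone of a convex set. -/

import Mathlib

open scoped RealInnerProductSpace

noncomputable section

/-- Euclidean space ℝ^n. -/
abbrev E (n : ℕ) := EuclideanSpace ℝ (Fin n)

/-- Support of a vector, as a finset. -/
def spt {n : ℕ} (x : E n) : Finset (Fin n) := Finset.univ.filter (fun i => x i ≠ 0)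

/-- A set is symmetric if it is invariant under coordinate permutations. -/
def IsSymmSet {n : ℕ} (X : Set (E n)) : Prop :=
  ∀ x ∈ X, ∀ σ : Equiv.Perm (Fin n), (WithLp.toLp 2 (fun i => x (σ i)) : E n) ∈ X

/-- A set is sign-free symmetric if it is symmetric and invariant under sign flips. -/
def IsSignFreeSymmSet {n : ℕ} (X : Set (E n)) : Prop :=
  IsSymmSet X ∧ ∀ x ∈ X, ∀ ε : Fin n → ℝ, (∀ i, ε i = 1 ∨ ε i = -1) →
    (WithLp.toLp 2 (fun i => ε i * x i) : E n) ∈ X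

/-- A set is nonnegative symmetric if it is symmetric and contained in ℝ^n_+. -/
def IsNonnegSymmSet {n : ℕ} (X : Set (E n)) : Prop :=
  IsSymmSet X ∧ ∀ x ∈ X, ∀ i, 0 ≤ x i

/-- `y` is a (Euclidean) projection of `x` onto `X`. -/
def IsProj {n : ℕ} (X : Set (E n)) (x y : E n) : Prop :=
  y ∈ X ∧ ∀ z ∈ X, ‖y - x‖ ≤ ‖z - x‖

/-- The set of s-sparse vectors. -/
def Cs (n s : ℕ) : Set (E n) := {x | (spt x).card ≤ s}

theorem stmt11 {n s : ℕ} (X : Fin n → Set ℝ)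
    (hXcl : ∀ i, IsClosed (X i)) (hXconv : ∀ i, Convex ℝ (X i))
    (hX0 : ∀ i, (0 : ℝ) ∈ X i)
    (hs1 : 1 ≤ s) (hs2 : s < n)
    (x : E n) (hx : ∀ i, x i ∈ X i) (hcard : (spt x).card < s)
    (v : E n)
    (hv : ∀ T : Finset (Fin n), spt x ⊆ T → T.card = s →
      ∀ y : E n, (∀ i, y i ∈ X i) → (∀ i ∉ T, y i = 0) → ⟪v, y - x⟫ ≤ 0) :
    ∀ y : E n, (∀ i, y i ∈ X i) → ⟪v, y - x⟫ ≤ 0 := by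
  intro y hy
  classical
  set S := spt x with hS
  have hxz : ∀ j, j ∉ S → x j = 0 := by
    intro j hj
    by_contra h
    exact hj (Finset.mem_filter.mpr ⟨Finset.mem_univ _, h⟩)
  have hinner : ∀ w : E n, ⟪v, w - x⟫ = ∑ j, v j * (w j - x j) := by
    intro w
    simp [PiLp.inner_apply, RCLike.inner_apply, PiLp.sub_apply]
    exact Finset.sum_congr rfl fun i _ => mul_comm _ _
  obtain ⟨T0, hST0, hT0card⟩ := Finset.exists_superset_card_eq hcard.le
    (by simpa using hs2.le)
  have hA : ∑ j ∈ S, v j * (y j - x j) ≤ 0 := by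
    have h1 := hv T0 hST0 hT0card (WithLp.toLp 2 (fun j => if j ∈ S then y j else 0))
      (fun j => by by_cases h : j ∈ S <;> simp [PiLp.toLp_apply, h, hy j, hX0 j])
      (fun j hj => by simp [PiLp.toLp_apply, show j ∉ S from fun h => hj (hST0 h)])
    rw [hinner] at h1
    simp only [PiLp.toLp_apply] at h1
    have e1 : (∑ j, v j * ((if j ∈ S then y j else 0) - x j))
        = ∑ j ∈ S, v j * (y j - x j) := by
      rw [← Finset.sum_subset (Finset.subset_univ S)
        (fun j _ hj => by simp [hj, hxz j hj])]
      exact Finset.sum_congr rfl fun j hj => by simp [hj]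
    linarith [e1 ▸ h1]
  have hB : ∀ i, i ∉ S → v i * y i ≤ 0 := by
    intro i hi
    obtain ⟨T, hST, hTcard⟩ := Finset.exists_superset_card_eq
      (show (insert i S).card ≤ s by
        calc (insert i S).card ≤ S.card + 1 := Finset.card_insert_le _ _
          _ ≤ s := hcard)
      (by simpa using hs2.le)
    have h2 := hv T (Finset.Subset.trans (Finset.subset_insert i S) hST) hTcard
      (WithLp.toLp 2 (fun j => if j ∈ S then x j else if j = i then y i else 0))
      (fun j => by
        by_cases h : j ∈ S
        · simp [PiLp.toLp_apply, h, hx j]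
        · by_cases h2 : j = i
          · subst h2; simp [PiLp.toLp_apply, h, hy j]
          · simp [PiLp.toLp_apply, h, h2, hX0 j])
      (fun j hj => by
        have h1 : j ∉ S := fun h => hj (hST (Finset.mem_insert_of_mem h))
        have h2 : j ≠ i := fun h => hj (hST (h ▸ Finset.mem_insert_self i S))
        simp [PiLp.toLp_apply, h1, h2])
    rw [hinner] at h2
    simp only [PiLp.toLp_apply] at h2
    have e2 : (∑ j, v j * ((if j ∈ S then x j else if j = i then y i else 0) - x j))
        = v i * y i := by
      rw [Finset.sum_eq_single i]
      · simp [hi, hxz i hi]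
      · intro j _ hji
        by_cases h : j ∈ S
        · simp [h]
        · simp [h, hji, hxz j h]
      · simp
    linarith [e2 ▸ h2]
  rw [hinner]
  have split : ∑ j, v j * (y j - x j)
      = (∑ j ∈ S, v j * (y j - x j)) + ∑ j ∈ Sᶜ, v j * y j := by
    rw [← Finset.sum_add_sum_compl S (fun j => v j * (y j - x j))]
    congr 1
    exact Finset.sum_congr rfl fun j hj => by
      rw [hxz j (Finset.mem_compl.mp hj), sub_zero]
  rw [split]
  have hC : ∑ j ∈ Sᶜ, v j * y j ≤ 0 :=
    Finset.sum_nonpos fun j hj => hB j (Finset.mem_compl.mp hj)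
  linarith
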